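/- Let T₁,…,T_{n−1} be infinite sets of dyadic numbers, Γ ⊂ ℤ an infinite set, 1 ≤ p ≤ n−1, and 1 ≤ j₁ < ⋯ < j_p ≤ n−1. Let B be the basis of all n-dimensional intervals R₁×⋯×Rₙ such that |R₁| ∈ T₁,…,|R_{n−1}| ∈ T_{n−1} and |Rₙ| = 2^γ·|R_{j₁}|⋯|R_{j_p}| for some γ ∈ Γ. Then there is a constant cₙ > 0 depending only on n such that for every α ∈ (0,1) there exists a bounded measurable set E ⊂ ℝⁿ of positive Lebesgue measure with |{x ∈ ℝⁿ : M_B(χ_E)(x) > α}| ≥ cₙ · (1/α) · (1 + log(1/α))^{n−1} · |E|. -/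

import Mathlib

open MeasureTheory Set
open scoped ENNReal

noncomputable section

/-- An axis-parallel interval (box) in `ℝⁿ`, given by its left and right endpoints. -/
structure BoxInterval (n : ℕ) where
  a : Fin n → ℝ
  b : Fin n → ℝ
  hab : ∀ j, a j < b j

namespace BoxInterval

/-- The underlying set of a box. -/
def toSet {n : ℕ} (R : BoxInterval n) : Set (Fin n → ℝ) :=
  Set.univ.pi fun j => Set.Icc (R.a j) (R.b j)

/-- The side length of a box in direction `j`. -/
def side {n : ℕ} (R : BoxInterval n) (j : Fin n) : ℝ := R.b j - R.a j

/-- Translation of a box by a vector `v`. -/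
def translate {n : ℕ} (R : BoxInterval n) (v : Fin n → ℝ) : BoxInterval n where
  a := fun j => R.a j + v j
  b := fun j => R.b j + v j
  hab := fun j => by have := R.hab j; linarith

end BoxInterval

/-- A rare basis in `ℝⁿ`: a nonempty translation-invariant collection of intervals. -/
def IsRareBasis {n : ℕ} (B : Set (BoxInterval n)) : Prop :=
  B.Nonempty ∧ ∀ R ∈ B, ∀ v : Fin n → ℝ, R.translate v ∈ B

/-- The geometric maximal operator `M_B` associated with a collection `B` of boxes:
`M_B f (x) = sup { (1/|R|) ∫_R |f| : x ∈ R ∈ B }`. -/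
def maxOp {n : ℕ} (B : Set (BoxInterval n)) (f : (Fin n → ℝ) → ℝ)
    (x : Fin n → ℝ) : ℝ≥0∞ :=
  ⨆ (R : BoxInterval n) (_ : R ∈ B) (_ : x ∈ R.toSet),
    (∫⁻ y in R.toSet, ENNReal.ofReal |f y| ∂volume) / volume R.toSet

/-- The spectrum `W_B ⊂ ℤⁿ` of a collection of boxes: all tuples
`(⌈log₂ |R₁|⌉, …, ⌈log₂ |Rₙ|⌉)` over boxes `R₁ × ⋯ × Rₙ ∈ B`. -/
def spectrumB {n : ℕ} (B : Set (BoxInterval n)) : Set (Fin n → ℤ) :=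
  {w | ∃ R ∈ B, ∀ j, w j = ⌈Real.logb 2 (R.side j)⌉}

/-- The slice `W_t` of `W ⊂ ℤ^{k+1}` over `t ∈ ℤᵏ`. -/
def sliceZ {k : ℕ} (W : Set (Fin (k + 1) → ℤ)) (t : Fin k → ℤ) : Set ℤ :=
  {τ | Fin.snoc t τ ∈ W}

/-- `W` is a net for `S` in `ℤ^{k+1}`: every slice of `W` is a one-dimensional
net for the corresponding slice of `S`. -/
def IsNetMulti {k : ℕ} (W S : Set (Fin (k + 1) → ℤ)) : Prop :=
  ∀ t : Fin k → ℤ, ∃ N : ℕ, ∀ τ ∈ sliceZ S t, ∃ w ∈ sliceZ W t, |τ - w| ≤ (N : ℤ)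

/-- Projection of `W ⊂ ℤⁿ` onto the first `k` coordinates. -/
def projZ {n : ℕ} (k : ℕ) (hk : k ≤ n) (W : Set (Fin n → ℤ)) : Set (Fin k → ℤ) :=
  (fun w (i : Fin k) => w (Fin.castLE hk i)) '' W

/-- `W ⊂ ℤⁿ` is dense in `S₁ × ⋯ × Sₙ`: for each `k`, `π_{k+1}(W)` is a net for
`π_k(W) × S_{k+1}`. -/
def IsDenseIn {n : ℕ} (W : Set (Fin n → ℤ)) (S : Fin n → Set ℤ) : Prop :=
  ∀ k : Fin n,
    IsNetMulti (projZ (k.val + 1) k.isLt W)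
      {v : Fin (k.val + 1) → ℤ |
        Fin.init v ∈ projZ k.val (Nat.le_of_lt k.isLt) W ∧ v (Fin.last k.val) ∈ S k}

/-- `Ω_{n,k}`: the set of `n`-tuples of positive integers summing to `k`. -/
def OmegaNK (n k : ℕ) : Set (Fin n → ℕ) :=
  {m | (∀ j, 1 ≤ m j) ∧ ∑ j, m j = k}

/-- The smallest box concentric with `R`, containing `R`, with dyadic side lengths. -/
def dyadicHull {n : ℕ} (R : BoxInterval n) : BoxInterval n where
  a := fun j => (R.a j + R.b j) / 2 - (2:ℝ) ^ ⌈Real.logb 2 (R.side j)⌉ / 2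
  b := fun j => (R.a j + R.b j) / 2 + (2:ℝ) ^ ⌈Real.logb 2 (R.side j)⌉ / 2
  hab := fun j => by
    have h : (0:ℝ) < (2:ℝ) ^ ⌈Real.logb 2 (R.side j)⌉ := by positivity
    linarith

/-- The dyadic skeleton `B_d` of a collection `B`. -/
def dyadicSkeleton {n : ℕ} (B : Set (BoxInterval n)) : Set (BoxInterval n) :=
  {Rd | ∃ R ∈ B, Rd = dyadicHull R}

/-- `B` is `Ω`-complete (for `Ω ⊆ Ω_{n,k}`). -/
def OmegaComplete {n : ℕ} (B : Set (BoxInterval n)) (k : ℕ) (Ω : Set (Fin n → ℕ)) : Prop :=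
  ∃ s : Fin n → ℕ → ℤ,
    (∀ j, ∀ m, m < k → s j m < s j (m + 1)) ∧
    ∀ m ∈ Ω, ∃ R ∈ dyadicSkeleton B, ∀ j,
      R.side j ∈ Set.Ioc ((2:ℝ) ^ s j (m j - 1)) ((2:ℝ) ^ s j (m j))

/-- Product of an `n`-dimensional box and a one-dimensional box. -/
def prodBox {n : ℕ} (J1 : BoxInterval n) (J2 : BoxInterval 1) : BoxInterval (n + 1) where
  a := Fin.snoc J1.a (J2.a 0)
  b := Fin.snoc J1.b (J2.b 0)
  hab := fun j => by
    induction j using Fin.lastCases with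
    | last => simpa using J2.hab 0
    | cast i => simpa using J1.hab i

/-- The product basis `B₁ × B₂`. -/
def prodBasis {n : ℕ} (B1 : Set (BoxInterval n)) (B2 : Set (BoxInterval 1)) :
    Set (BoxInterval (n + 1)) :=
  {R | ∃ J1 ∈ B1, ∃ J2 ∈ B2, R = prodBox J1 J2}

/-- The (is)-property of a rare basis in `ℝ²`. -/
def ISProperty (B : Set (BoxInterval 2)) : Prop :=
  ∀ k : ℕ, ∃ R : Fin (k + 1) → BoxInterval 2,
    (∀ i, R i ∈ B) ∧
    (∀ i, (R i).a = fun _ => 0) ∧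
    (∀ i, ∃ pq : Fin 2 → ℤ, ∀ l, (R i).b l = (2:ℝ) ^ pq l) ∧
    (∀ i j, i ≠ j → ∀ v : Fin 2 → ℝ, ¬ ((R i).translate v).toSet ⊆ (R j).toSet) ∧
    (∀ i j, ∃ Q ∈ B, Q.toSet = (R i).toSet ∩ (R j).toSet)

namespace Rare14

lemma ofReal_two_zpow (m : ℤ) : ENNReal.ofReal ((2:ℝ)^m) = (2:ℝ≥0∞)^m := by
  induction m using Int.induction_on with
  | zero => simp
  | succ n ih =>
      rw [zpow_add₀ (two_ne_zero) n 1, ENNReal.zpow_add (by norm_num) (by norm_num) n 1,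
        ENNReal.ofReal_mul (by positivity), ih]
      norm_num
  | pred n ih =>
      rw [show (-(n:ℤ) - 1) = (-n) + (-1) by ring, zpow_add₀ (two_ne_zero (α := ℝ)),
        ENNReal.zpow_add (by norm_num) (by norm_num), ENNReal.ofReal_mul (by positivity), ih]
      congr 1
      rw [zpow_neg_one, ENNReal.ofReal_inv_of_pos (by norm_num), zpow_neg_one]
      norm_num

/-- the set of reals whose binary digit at position `s` is zero -/
def ZeroSet (s : ℤ) : Set ℝ :=
  ⋃ q : ℤ, Ico ((q:ℝ) * 2^(s+1)) ((q:ℝ) * 2^(s+1) + 2^s)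

lemma measurableSet_ZeroSet (s : ℤ) : MeasurableSet (ZeroSet s) :=
  MeasurableSet.iUnion fun _ => measurableSet_Ico

lemma ZeroSet_shift (s t : ℤ) :
    (fun x : ℝ => (t:ℝ) * 2^(s+1) + x) ⁻¹' ZeroSet s = ZeroSet s := by
  ext x
  simp only [mem_preimage, ZeroSet, mem_iUnion, mem_Ico]
  constructor
  · rintro ⟨q, h1, h2⟩
    refine ⟨q - t, ?_, ?_⟩ <;> push_cast <;> nlinarith [h1, h2]
  · rintro ⟨q, h1, h2⟩
    refine ⟨q + t, ?_, ?_⟩ <;> push_cast <;> nlinarith [h1, h2]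

lemma volume_inter_shift (a : ℝ) (lam : ℤ) (S : Finset ℤ)
    (ha : ∀ s ∈ S, ∃ t : ℤ, a = (t:ℝ) * 2^(s+1)) :
    volume (Ico a (a + 2^lam) ∩ ⋂ s ∈ S, ZeroSet s)
      = volume (Ico (0:ℝ) (2^lam) ∩ ⋂ s ∈ S, ZeroSet s) := by
  rw [← measure_preimage_add volume a (Ico a (a + 2^lam) ∩ ⋂ s ∈ S, ZeroSet s)]
  congr 1
  rw [preimage_inter, preimage_iInter₂]
  congr 1
  · ext x
    simp only [mem_preimage, mem_Ico]
    constructor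
    · rintro ⟨h1, h2⟩; constructor <;> linarith
    · rintro ⟨h1, h2⟩; constructor <;> linarith
  · apply iInter₂_congr
    intro s hs
    obtain ⟨t, ht⟩ := ha s hs
    rw [ht]
    exact ZeroSet_shift s t

lemma cast_two_pow_toNat (k : ℤ) (hk : 0 ≤ k) :
    ((2^(k.toNat) : ℕ) : ℝ) = (2:ℝ)^k := by
  push_cast
  rw [← zpow_natCast, Int.toNat_of_nonneg hk]

lemma Ico_inter_zero_decomp (lam s0 : ℤ) (h : s0 < lam) :
    Ico (0:ℝ) (2^lam) ∩ ZeroSet s0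
      = ⋃ t ∈ Finset.range (2^((lam - s0 - 1).toNat)),
          Ico ((t:ℝ) * 2^(s0+1)) ((t:ℝ) * 2^(s0+1) + 2^s0) := by
  have hP : (0:ℝ) < 2^s0 := by positivity
  have hP1 : (2:ℝ)^(s0+1) = 2 * 2^s0 := by
    rw [zpow_add₀ (two_ne_zero), zpow_one]; ring
  have hM : ((2^((lam - s0 - 1).toNat) : ℕ) : ℝ) = (2:ℝ)^(lam - s0 - 1) :=
    cast_two_pow_toNat _ (by omega)
  have hlam : (2:ℝ)^lam = ((2^((lam - s0 - 1).toNat) : ℕ) : ℝ) * 2^(s0+1) := by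
    rw [hM, ← zpow_add₀ (two_ne_zero (α := ℝ))]
    congr 1; ring
  ext x
  simp only [mem_inter_iff, mem_Ico, ZeroSet, mem_iUnion, Finset.mem_range]
  constructor
  · rintro ⟨⟨hx0, hxlam⟩, q, hq1, hq2⟩
    have hq0 : 0 ≤ q := by
      by_contra hq
      push_neg at hq
      have hq' : q ≤ -1 := by omega
      have : (q:ℝ) ≤ -1 := by exact_mod_cast hq'
      nlinarith
    have hqM : q < (2^((lam - s0 - 1).toNat) : ℕ) := by
      have : (q:ℝ) * 2^(s0+1) < ((2^((lam - s0 - 1).toNat) : ℕ) : ℝ) * 2^(s0+1) := by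
        rw [← hlam]; nlinarith
      have h2 : (q:ℝ) < ((2^((lam - s0 - 1).toNat) : ℕ) : ℝ) := by
        have h3 : (0:ℝ) < 2^(s0+1) := by positivity
        exact lt_of_mul_lt_mul_right this (le_of_lt h3)
      exact_mod_cast h2
    refine ⟨q.toNat, by omega, ?_, ?_⟩ <;>
      · rw [show ((q.toNat : ℕ) : ℝ) = (q:ℝ) by rw [← Int.cast_natCast]; congr 1; omega]
        assumption
  · rintro ⟨t, ht, h1, h2⟩
    have htR : ((t:ℕ) : ℝ) + 1 ≤ ((2^((lam - s0 - 1).toNat) : ℕ) : ℝ) := by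
      exact_mod_cast Nat.succ_le_of_lt ht
    refine ⟨⟨le_trans (by positivity) h1, ?_⟩, ⟨(t:ℤ), by push_cast; linarith, by push_cast; linarith⟩⟩
    rw [hlam]
    nlinarith

lemma volA : ∀ (N : ℕ) (S : Finset ℤ) (lam : ℤ) (a : ℝ), S.card = N →
    (∀ s ∈ S, s < lam) → (∀ s ∈ S, ∃ t : ℤ, a = (t:ℝ) * 2^(s+1)) →
    volume (Ico a (a + 2^lam) ∩ ⋂ s ∈ S, ZeroSet s) = 2^(lam - N) := by
  intro N
  induction N with
  | zero =>
      intro S lam a hcard _ _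
      rw [Finset.card_eq_zero.mp hcard]
      simp only [Finset.notMem_empty, iInter_of_empty, iInter_univ, inter_univ]
      rw [Real.volume_Ico, add_sub_cancel_left, ofReal_two_zpow]
      norm_num
  | succ N ih =>
      intro S lam a hcard hlt ha
      have hne : S.Nonempty := Finset.card_pos.mp (by omega)
      set s0 := S.max' hne with hs0
      have hs0mem : s0 ∈ S := S.max'_mem hne
      set S' := S.erase s0 with hS'
      have hcard' : S'.card = N := by
        rw [hS', Finset.card_erase_of_mem hs0mem, hcard]
        omega
      have hlt' : ∀ s ∈ S', s < s0 := fun s hs =>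
        lt_of_le_of_ne (S.le_max' s (Finset.mem_of_mem_erase hs)) (Finset.ne_of_mem_erase hs)
      have hs0lam : s0 < lam := hlt s0 hs0mem
      -- shift to 0
      rw [volume_inter_shift a lam S ha]
      -- split off s0
      have hins : S = insert s0 S' := (Finset.insert_erase hs0mem).symm
      rw [hins, Finset.set_biInter_insert, ← inter_assoc,
        Ico_inter_zero_decomp lam s0 hs0lam, Set.iUnion₂_inter]
      have hdisj : (Finset.range (2^((lam - s0 - 1).toNat)) : Set ℕ).PairwiseDisjoint
          (fun t : ℕ => (Ico ((t:ℝ) * 2^(s0+1)) ((t:ℝ)*2^(s0+1) + 2^s0)) ∩ ⋂ s ∈ S', ZeroSet s) := by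
        intro t1 h1 t2 h2 hne12
        have hP : (0:ℝ) < 2^s0 := by positivity
        have hP1 : (2:ℝ)^(s0+1) = 2 * 2^s0 := by
          rw [zpow_add₀ (two_ne_zero), zpow_one]; ring
        apply Set.disjoint_left.mpr
        rintro x ⟨hx1, _⟩ ⟨hx2, _⟩
        simp only [mem_Ico] at hx1 hx2
        rcases lt_or_gt_of_ne hne12 with h | h
        · have : ((t1:ℝ) + 1) ≤ (t2:ℝ) := by exact_mod_cast h
          nlinarith [hx1.1, hx1.2, hx2.1, hx2.2]
        · have : ((t2:ℝ) + 1) ≤ (t1:ℝ) := by exact_mod_cast h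
          nlinarith [hx1.1, hx1.2, hx2.1, hx2.2]
      rw [measure_biUnion_finset hdisj (fun t _ => (measurableSet_Ico.inter
        (MeasurableSet.biInter (Set.to_countable _) (fun s _ => measurableSet_ZeroSet s))))]
      have hpiece : ∀ t ∈ Finset.range (2^((lam - s0 - 1).toNat)),
          volume ((Ico ((t:ℝ) * 2^(s0+1)) ((t:ℝ)*2^(s0+1) + 2^s0)) ∩ ⋂ s ∈ S', ZeroSet s)
            = 2^(s0 - N) := by
        intro t _
        have : ((t:ℝ) * 2^(s0+1) + 2^s0) = ((t:ℝ) * 2^(s0+1)) + 2^s0 := rfl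
        rw [this]
        apply ih S' s0 _ hcard' hlt'
        intro s hs
        have hsl : s < s0 := hlt' s hs
        refine ⟨(t:ℤ) * 2^((s0 - s).toNat), ?_⟩
        push_cast
        rw [mul_assoc, ← zpow_natCast (2:ℝ), Int.toNat_of_nonneg (by omega),
          ← zpow_add₀ (two_ne_zero (α := ℝ))]
        congr 2
        omega
      rw [Finset.sum_congr rfl hpiece, Finset.sum_const, Finset.card_range, nsmul_eq_mul]
      have hMcast : ((2^((lam - s0 - 1).toNat) : ℕ) : ℝ≥0∞) = (2:ℝ≥0∞)^(lam - s0 - 1) := by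
        push_cast
        rw [← zpow_natCast (2:ℝ≥0∞), Int.toNat_of_nonneg (by omega)]
      rw [hMcast, ← ENNReal.zpow_add (by norm_num) (by norm_num)]
      congr 1
      push_cast
      ring

/-- kept cells at level `m` of the ladder Cantor construction -/
def topSet (σ : ℕ → ℤ) (K m : ℕ) : Set ℝ :=
  Ico 0 ((2:ℝ)^(σ K)) ∩ ⋂ l ∈ Finset.Ico m K, ZeroSet (σ l)

lemma measurableSet_topSet (σ : ℕ → ℤ) (K m : ℕ) : MeasurableSet (topSet σ K m) :=
  measurableSet_Ico.inter
    (MeasurableSet.biInter (Set.to_countable _) (fun s _ => measurableSet_ZeroSet _))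

lemma topSet_mono (σ : ℕ → ℤ) (K : ℕ) {m m' : ℕ} (h : m ≤ m') :
    topSet σ K m ⊆ topSet σ K m' := by
  intro x hx
  simp only [topSet, mem_inter_iff, mem_iInter, Finset.mem_Ico] at hx ⊢
  exact ⟨hx.1, fun l hl => hx.2 l ⟨by omega, hl.2⟩⟩

lemma grid_nest (lam : ℤ) (A h x : ℝ) (t : ℤ) (u : ℕ) (hA : A = (t:ℝ) * 2^lam)
    (hh : h = (u:ℝ) * 2^lam) (hx1 : A ≤ x) (hx2 : x < A + h) :
    Ico ((⌊x / 2^lam⌋ : ℝ) * 2^lam) ((⌊x / 2^lam⌋ : ℝ) * 2^lam + 2^lam) ⊆ Ico A (A + h) := by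
  have hP : (0:ℝ) < 2^lam := by positivity
  have hq1 : (t:ℝ) ≤ (⌊x / 2^lam⌋ : ℝ) := by
    have : (t:ℤ) ≤ ⌊x / 2^lam⌋ := by
      apply Int.le_floor.mpr
      rw [le_div_iff₀ hP]
      linarith [hA ▸ hx1]
    exact_mod_cast this
  have hq2 : (⌊x / 2^lam⌋ : ℝ) + 1 ≤ (t:ℝ) + (u:ℝ) := by
    have hfl : ⌊x / 2^lam⌋ < t + (u:ℤ) := by
      apply Int.floor_lt.mpr
      rw [div_lt_iff₀ hP]
      push_cast
      nlinarith [hx2, hA, hh]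
    have : ⌊x / 2^lam⌋ + 1 ≤ t + (u:ℤ) := by omega
    exact_mod_cast this
  apply Set.Ico_subset_Ico
  · rw [hA]; nlinarith
  · rw [hA, hh]; nlinarith

section Ladder
variable {σ : ℕ → ℤ} {K : ℕ} (hgap : ∀ l, l < K → σ l + 1 ≤ σ (l + 1))

include hgap in
lemma sigma_gap_mono : ∀ {a b : ℕ}, a ≤ b → b ≤ K → σ a ≤ σ b := by
  intro a b hab hbK
  induction hab with
  | refl => exact le_rfl
  | @step b hb ih =>
      have h1 := hgap b (by omega)
      have h2 := ih (by omega)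
      show σ a ≤ σ (b+1)
      omega

include hgap in
lemma sigma_gap_strict : ∀ {a b : ℕ}, a < b → b ≤ K → σ a + 1 ≤ σ b := by
  intro a b hab hbK
  have h1 := hgap a (by omega)
  have h2 := sigma_gap_mono hgap (show a + 1 ≤ b by omega) hbK
  omega

include hgap in
lemma volume_topSet {m : ℕ} (hm : m ≤ K) :
    volume (topSet σ K m) = 2^((σ K : ℤ) - (K - m : ℕ)) := by
  have hinj : Set.InjOn σ (Finset.Ico m K : Set ℕ) := by
    intro a ha b hb hab
    simp only [Finset.coe_Ico, mem_Ico] at ha hb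
    by_contra hne
    rcases Nat.lt_or_ge a b with h | h
    · have := sigma_gap_strict hgap h (by omega); omega
    · have := sigma_gap_strict hgap (show b < a by omega) (by omega); omega
  have hbi : ⋂ l ∈ Finset.Ico m K, ZeroSet (σ l)
      = ⋂ s ∈ (Finset.Ico m K).image σ, ZeroSet s := by
    ext x
    simp only [mem_iInter, Finset.mem_image]
    constructor
    · rintro h s ⟨l, hl, rfl⟩; exact h l hl
    · intro h l hl; exact h (σ l) ⟨l, hl, rfl⟩
  have hcard : ((Finset.Ico m K).image σ).card = K - m := by
    rw [Finset.card_image_of_injOn hinj, Nat.card_Ico]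
  rw [topSet, hbi, show Ico (0:ℝ) (2^(σ K)) = Ico (0:ℝ) (0 + 2^(σ K)) by rw [zero_add]]
  rw [volA (K - m) _ (σ K) 0 hcard ?hlt ?ha]
  case hlt =>
    intro s hs
    obtain ⟨l, hl, rfl⟩ := Finset.mem_image.mp hs
    simp only [Finset.mem_Ico] at hl
    have := sigma_gap_strict hgap hl.2 (le_refl K)
    omega
  case ha =>
    intro s _
    exact ⟨0, by norm_num⟩

include hgap in
lemma capture {m : ℕ} (lam : ℤ) (hm1 : 1 ≤ m) (hmK : m ≤ K)
    (h1 : σ (m - 1) < lam) (h2 : lam ≤ σ m) {x : ℝ} (hx : x ∈ topSet σ K m) :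
    (⌊x / 2^lam⌋ : ℝ) * 2^lam ≤ x ∧ x < (⌊x / 2^lam⌋ : ℝ) * 2^lam + 2^lam ∧
    volume (topSet σ K 0 ∩ Ico ((⌊x / 2^lam⌋ : ℝ) * 2^lam) ((⌊x / 2^lam⌋ : ℝ) * 2^lam + 2^lam))
      = 2^(lam - m) := by
  have hP : (0:ℝ) < 2^lam := by positivity
  have hfl1 : (⌊x / 2^lam⌋ : ℝ) * 2^lam ≤ x := by
    rw [← le_div_iff₀ hP]; exact Int.floor_le _
  have hfl2 : x < (⌊x / 2^lam⌋ : ℝ) * 2^lam + 2^lam := by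
    have := Int.lt_floor_add_one (x / 2^lam)
    rw [div_lt_iff₀ hP] at this
    linarith
  refine ⟨hfl1, hfl2, ?_⟩
  obtain ⟨hxI, hxZ⟩ := hx
  simp only [mem_iInter, Finset.mem_Ico] at hxZ
  simp only [mem_Ico] at hxI
  set I := Ico ((⌊x / 2^lam⌋ : ℝ) * 2^lam) ((⌊x / 2^lam⌋ : ℝ) * 2^lam + 2^lam) with hI
  have hlamK : lam ≤ σ K := le_trans h2 (sigma_gap_mono hgap hmK (le_refl K))
  have hsub0 : I ⊆ Ico 0 ((2:ℝ)^(σ K)) := by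
    have h0 := grid_nest lam 0 ((2:ℝ)^(σ K)) x 0 (2^((σ K - lam).toNat))
      (by norm_num)
      (by rw [cast_two_pow_toNat _ (by omega), ← zpow_add₀ (two_ne_zero (α := ℝ))]
          congr 1; omega)
      hxI.1 (by simpa using hxI.2)
    simpa using h0
  have hsubZ : ∀ l, m ≤ l → l < K → I ⊆ ZeroSet (σ l) := by
    intro l hl1 hl2
    have hxZl := hxZ l ⟨hl1, hl2⟩
    simp only [ZeroSet, mem_iUnion, mem_Ico] at hxZl
    obtain ⟨q, hq1, hq2⟩ := hxZl
    have hlaml : lam ≤ σ l := le_trans h2 (sigma_gap_mono hgap hl1 (by omega))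
    have hblock : I ⊆ Ico ((q:ℝ) * 2^(σ l + 1)) ((q:ℝ) * 2^(σ l + 1) + 2^(σ l)) := by
      apply grid_nest lam _ _ x (q * 2^((σ l + 1 - lam).toNat)) (2^((σ l - lam).toNat))
      · push_cast
        rw [mul_assoc, ← zpow_natCast (2:ℝ), Int.toNat_of_nonneg (by omega),
          ← zpow_add₀ (two_ne_zero (α := ℝ))]
        congr 2; omega
      · rw [cast_two_pow_toNat _ (by omega), ← zpow_add₀ (two_ne_zero (α := ℝ))]
        congr 1; omega
      · exact hq1
      · exact hq2
    intro y hy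
    exact mem_iUnion.mpr ⟨q, hblock hy⟩
  have hset : topSet σ K 0 ∩ I = I ∩ ⋂ s ∈ (Finset.range m).image σ, ZeroSet s := by
    ext y
    simp only [topSet, mem_inter_iff, mem_iInter, Finset.mem_Ico, Finset.mem_image,
      Finset.mem_range]
    constructor
    · rintro ⟨⟨hy1, hy2⟩, hyI⟩
      refine ⟨hyI, ?_⟩
      rintro s ⟨l, hl, rfl⟩
      exact hy2 l ⟨by omega, by omega⟩
    · rintro ⟨hyI, hyZ⟩
      refine ⟨⟨hsub0 hyI, ?_⟩, hyI⟩
      rintro l ⟨-, hl2⟩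
      rcases Nat.lt_or_ge l m with h | h
      · exact hyZ (σ l) ⟨l, h, rfl⟩
      · exact hsubZ l h hl2 hyI
  have hinj : Set.InjOn σ (Finset.range m : Set ℕ) := by
    intro a ha b hb hab
    simp only [Finset.coe_range, mem_Iio] at ha hb
    by_contra hne
    rcases Nat.lt_or_ge a b with h | h
    · have := sigma_gap_strict hgap h (by omega); omega
    · have := sigma_gap_strict hgap (show b < a by omega) (by omega); omega
  have hcard : ((Finset.range m).image σ).card = m := by
    rw [Finset.card_image_of_injOn hinj, Finset.card_range]
  rw [hset, hI]
  rw [volA m _ lam ((⌊x / 2^lam⌋ : ℝ) * 2^lam) hcard ?hlt ?ha]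
  case hlt =>
    intro s hs
    obtain ⟨l, hl, rfl⟩ := Finset.mem_image.mp hs
    simp only [Finset.mem_range] at hl
    have hle : σ l ≤ σ (m-1) := sigma_gap_mono hgap (by omega) (by omega)
    omega
  case ha =>
    intro s hs
    obtain ⟨l, hl, rfl⟩ := Finset.mem_image.mp hs
    simp only [Finset.mem_range] at hl
    have hle : σ l ≤ σ (m-1) := sigma_gap_mono hgap (by omega) (by omega)
    refine ⟨⌊x / 2^lam⌋ * 2^((lam - (σ l + 1)).toNat), ?_⟩
    push_cast
    rw [mul_assoc, ← zpow_natCast (2:ℝ), Int.toNat_of_nonneg (by omega),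
      ← zpow_add₀ (two_ne_zero (α := ℝ))]
    congr 2; omega

end Ladder

lemma two_zpow_ne_zero (m : ℤ) : (2:ℝ≥0∞)^m ≠ 0 := by
  rw [← ofReal_two_zpow]
  simp [ENNReal.ofReal_eq_zero, not_le]
  positivity

lemma two_zpow_ne_top (m : ℤ) : (2:ℝ≥0∞)^m ≠ ⊤ := by
  rw [← ofReal_two_zpow]; exact ENNReal.ofReal_ne_top

lemma two_zpow_mul (a b : ℤ) : (2:ℝ≥0∞)^(a+b) = 2^a * 2^b :=
  ENNReal.zpow_add (by norm_num) (by norm_num) a b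

lemma prod_two_zpow {ι : Type*} (s : Finset ι) (f : ι → ℤ) :
    ∏ i ∈ s, (2:ℝ≥0∞)^(f i) = 2^(∑ i ∈ s, f i) := by
  induction s using Finset.cons_induction with
  | empty => simp
  | cons a s ha ih => rw [Finset.prod_cons, Finset.sum_cons, two_zpow_mul, ih]

lemma prod_two_zpow_real {ι : Type*} (s : Finset ι) (f : ι → ℤ) :
    ∏ i ∈ s, (2:ℝ)^(f i) = 2^(∑ i ∈ s, f i) := by
  induction s using Finset.cons_induction with
  | empty => simp
  | cons a s ha ih => rw [Finset.prod_cons, Finset.sum_cons, zpow_add₀ (two_ne_zero), ih]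

/-- any infinite set of integers contains `k` increasing elements with prescribed gaps -/
lemma exists_gaps_aux {S : Set ℤ} (G : ℤ) (h : ∀ b : ℤ, ∃ x ∈ S, b ≤ x) :
    ∃ f : ℕ → ℤ, (∀ i, f i ∈ S) ∧ ∀ i, f i + G ≤ f (i+1) := by
  choose g hg1 hg2 using h
  refine ⟨fun i => Nat.rec (g 0) (fun _ prev => g (prev + G)) i, fun i => ?_, fun i => hg2 _⟩
  cases i <;> apply hg1

lemma exists_gaps {S : Set ℤ} (hS : S.Infinite) (k : ℕ) (G : ℤ) :
    ∃ f : ℕ → ℤ, (∀ i < k, f i ∈ S) ∧ ∀ i, i + 1 < k → f i + G ≤ f (i+1) := by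
  have hdich : (∀ b : ℤ, ∃ x ∈ S, b ≤ x) ∨ (∀ b : ℤ, ∃ x ∈ S, x ≤ b) := by
    by_contra hc
    push_neg at hc
    obtain ⟨⟨b₁, hb₁⟩, ⟨b₂, hb₂⟩⟩ := hc
    exact hS ((Set.finite_Ioo b₂ b₁).subset fun x hx => ⟨hb₂ x hx, hb₁ x hx⟩)
  rcases hdich with h | h
  · obtain ⟨f, hf1, hf2⟩ := exists_gaps_aux G h
    exact ⟨f, fun i _ => hf1 i, fun i _ => hf2 i⟩
  · have h' : ∀ b : ℤ, ∃ x ∈ (Neg.neg '' S), b ≤ x := by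
      intro b
      obtain ⟨x, hx, hxb⟩ := h (-b)
      exact ⟨-x, ⟨x, hx, rfl⟩, by omega⟩
    obtain ⟨g, hg1, hg2⟩ := exists_gaps_aux G h'
    refine ⟨fun i => -(g (k - 1 - i)), fun i _ => ?_, fun i hik => ?_⟩
    · obtain ⟨y, hy, hy2⟩ := hg1 (k - 1 - i)
      simpa [← hy2] using hy
    · show -(g (k - 1 - i)) + G ≤ -(g (k - 1 - (i+1)))
      have h1 : k - 1 - i = (k - 1 - (i+1)) + 1 := by omega
      have h2 := hg2 (k - 1 - (i+1))
      rw [h1]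
      omega

lemma main_construction {n : ℕ} (hn : 1 ≤ n) (T : Fin n → Set ℝ)
    (hT : ∀ i, (T i).Infinite ∧ T i ⊆ {x | ∃ s : ℤ, x = (2:ℝ)^s})
    (Γ : Set ℤ) (hΓ : Γ.Infinite) (p : ℕ) (jj : Fin p → Fin n)
    (K : ℕ) (hK : 2*n + 2 ≤ K) (α : ℝ)
    (hα : ENNReal.ofReal α < 2^(-(K:ℤ))) :
    ∃ E : Set (Fin (n+1) → ℝ), Bornology.IsBounded E ∧ MeasurableSet E ∧ 0 < volume E ∧
      ((K/(2*n) : ℕ) : ℝ≥0∞)^n * 2^((K:ℤ) - (n+1)) * volume E ≤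
        volume {x | ENNReal.ofReal α < maxOp
          {R : BoxInterval (n+1) | (∀ i : Fin n, R.side i.castSucc ∈ T i) ∧
            ∃ γ ∈ Γ, R.side (Fin.last n) = (2:ℝ)^γ * ∏ i : Fin p, R.side (jj i).castSucc}
          (E.indicator fun _ => (1:ℝ)) x} := by
  classical
  -- exponent sets of the T i
  have hSinf : ∀ i : Fin n, {s : ℤ | (2:ℝ)^s ∈ T i}.Infinite := by
    intro i
    apply Set.Infinite.preimage (hT i).1
    intro x hx
    obtain ⟨s, hs⟩ := (hT i).2 hx
    exact ⟨s, hs.symm⟩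
  have hch := fun i : Fin n => exists_gaps (hSinf i) (K+1) 1
  choose σs hσ1 hσ2 using hch
  -- ladders for the first n coordinates
  have hgaps : ∀ i : Fin n, ∀ l, l < K → σs i l + 1 ≤ σs i (l+1) :=
    fun i l hl => hσ2 i l (by omega)
  set Dlo := ∑ i : Fin p, σs (jj i) 1 with hDlo
  set Dhi := ∑ i : Fin p, σs (jj i) K with hDhi
  have hDlohi : Dlo ≤ Dhi :=
    Finset.sum_le_sum fun i _ => sigma_gap_mono (hgaps (jj i)) (by omega) (le_refl K)
  obtain ⟨γf, hγ1, hγ2⟩ := exists_gaps hΓ (K+1) (Dhi - Dlo + 1)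
  -- the last-coordinate ladder
  set σlast : ℕ → ℤ := fun l => if l = 0 then γf 1 + Dlo - 1 else γf l + Dhi with hσlast
  set σ : Fin (n+1) → ℕ → ℤ := fun j => Fin.lastCases σlast (fun i => σs i) j with hσdef
  have hσcast : ∀ i : Fin n, σ i.castSucc = σs i := fun i => by
    simp [hσdef]
  have hσla : σ (Fin.last n) = σlast := by simp [hσdef]
  have hgap : ∀ j : Fin (n+1), ∀ l, l < K → σ j l + 1 ≤ σ j (l+1) := by
    intro j
    induction j using Fin.lastCases with
    | last =>
        intro l hl
        rw [hσla, hσlast]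
        rcases Nat.eq_zero_or_pos l with h0 | hpos
        · subst h0
          have := hγ2 1 (by omega)
          norm_num
          omega
        · have := hγ2 l (by omega)
          simp only [if_neg (by omega : ¬ l = 0), if_neg (by omega : ¬ (l+1 = 0))]
          omega
    | cast i =>
        intro l hl
        rw [hσcast]
        exact hgaps i l hl
  -- the Cantor-type set E
  set E : Set (Fin (n+1) → ℝ) := Set.univ.pi (fun j => topSet (σ j) K 0) with hEdef
  have hEmeas : MeasurableSet E := MeasurableSet.univ_pi (fun j => measurableSet_topSet _ _ _)
  have hEbd : Bornology.IsBounded E := by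
    apply (isCompact_Icc (a := fun _ : Fin (n+1) => (0:ℝ)) (b := fun j => (2:ℝ)^(σ j K))).isBounded.subset
    rw [← Set.pi_univ_Icc]
    intro x hx
    rw [Set.mem_univ_pi]
    intro j
    have h1 : x j ∈ Ico 0 ((2:ℝ)^(σ j K)) := (hx j (mem_univ j)).1
    exact ⟨h1.1, le_of_lt h1.2⟩
  have hEvol : volume E = ∏ j : Fin (n+1), (2:ℝ≥0∞)^((σ j K : ℤ) - (K:ℤ)) := by
    rw [hEdef, volume_pi_pi]
    apply Finset.prod_congr rfl
    intro j _
    rw [volume_topSet (hgap j) (Nat.zero_le K)]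
    norm_num
  have hEpos : 0 < volume E := by
    rw [hEvol]
    exact pos_iff_ne_zero.mpr (Finset.prod_ne_zero_iff.mpr fun j _ => two_zpow_ne_zero _)
  refine ⟨E, hEbd, hEmeas, hEpos, ?_⟩
  -- the patterns
  set q := K / (2*n) with hq
  have hq1 : 1 ≤ q := by
    rw [hq]
    exact (Nat.one_le_div_iff (by omega)).mpr (by omega)
  have hdivmul : q * (2*n) ≤ K := by
    have h := Nat.div_mul_le_self K (2*n)
    rw [← hq] at h
    exact h
  have hqK : q ≤ K := by
    rw [hq]
    exact Nat.div_le_self _ _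
  set r : (Fin n → Fin q) → Fin (n+1) → ℕ :=
    fun a => Fin.lastCases (K - ∑ i : Fin n, ((a i : ℕ) + 1)) (fun i => (a i : ℕ) + 1) with hrdef
  have hsumbound : ∀ a : Fin n → Fin q, ∑ i : Fin n, ((a i : ℕ) + 1) + 1 ≤ K := by
    intro a
    have h1 : ∀ i : Fin n, (a i : ℕ) + 1 ≤ q := fun i => (a i).2
    have h2 : ∑ i : Fin n, ((a i : ℕ) + 1) ≤ n * q := by
      calc ∑ i : Fin n, ((a i : ℕ) + 1) ≤ ∑ _i : Fin n, q := Finset.sum_le_sum fun i _ => h1 i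
      _ = n * q := by rw [Finset.sum_const, Finset.card_univ, Fintype.card_fin, smul_eq_mul]
    have h4 : q * (2*n) = 2*(n*q) := by ring
    have h5 : 1*1 ≤ n*q := Nat.mul_le_mul hn hq1
    omega
  have hrcast : ∀ a i, r a i.castSucc = (a i : ℕ) + 1 := by
    intro a i; simp [hrdef]
  have hrlast : ∀ a, r a (Fin.last n) = K - ∑ i : Fin n, ((a i : ℕ) + 1) := by
    intro a; simp [hrdef]
  have hr1 : ∀ a j, 1 ≤ r a j := by
    intro a j
    induction j using Fin.lastCases with
    | last => rw [hrlast]; have := hsumbound a; omega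
    | cast i => rw [hrcast]; omega
  have hrK : ∀ a j, r a j ≤ K := by
    intro a j
    induction j using Fin.lastCases with
    | last => rw [hrlast]; omega
    | cast i =>
        rw [hrcast]
        have h1 : (a i : ℕ) + 1 ≤ q := (a i).2
        have := hsumbound a
        have h3 : (a i : ℕ) + 1 ≤ ∑ i' : Fin n, ((a i' : ℕ) + 1) :=
          Finset.single_le_sum (f := fun i' : Fin n => (a i' : ℕ) + 1) (fun _ _ => by omega)
            (Finset.mem_univ i)
        omega
  have hrsum : ∀ a, ∑ j : Fin (n+1), r a j = K := by
    intro a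
    rw [Fin.sum_univ_castSucc]
    have := hsumbound a
    simp only [hrcast, hrlast]
    omega
  -- side lengths for pattern boxes
  set lam : (Fin n → Fin q) → Fin (n+1) → ℤ :=
    fun a => Fin.lastCases (γf (r a (Fin.last n)) + ∑ i : Fin p, σs (jj i) (r a ((jj i).castSucc)))
      (fun i => σs i (r a i.castSucc)) with hlamdef
  have hlamcast : ∀ a (i : Fin n), lam a i.castSucc = σs i (r a i.castSucc) := by
    intro a i; simp [hlamdef]
  have hlamlast : ∀ a, lam a (Fin.last n)
      = γf (r a (Fin.last n)) + ∑ i : Fin p, σs (jj i) (r a ((jj i).castSucc)) := by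
    intro a; simp [hlamdef]
  have hsum_ge : ∀ a, Dlo ≤ ∑ i : Fin p, σs (jj i) (r a ((jj i).castSucc)) := by
    intro a
    apply Finset.sum_le_sum
    intro i _
    exact sigma_gap_mono (hgaps (jj i)) (hr1 a _) (hrK a _)
  have hsum_le : ∀ a, ∑ i : Fin p, σs (jj i) (r a ((jj i).castSucc)) ≤ Dhi := by
    intro a
    apply Finset.sum_le_sum
    intro i _
    exact sigma_gap_mono (hgaps (jj i)) (hrK a _) (le_refl K)
  have hlam_high : ∀ a j, lam a j ≤ σ j (r a j) := by
    intro a j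
    induction j using Fin.lastCases with
    | last =>
        rw [hlamlast, hσla, hσlast]
        have h1 := hr1 a (Fin.last n)
        simp only [if_neg (by omega : ¬ r a (Fin.last n) = 0)]
        have := hsum_le a
        omega
    | cast i => rw [hlamcast, hσcast]
  have hlam_low : ∀ a j, σ j (r a j - 1) < lam a j := by
    intro a j
    induction j using Fin.lastCases with
    | last =>
        rw [hlamlast, hσla, hσlast]
        have h1 := hr1 a (Fin.last n)
        have h2 := hrK a (Fin.last n)
        have h3 := hsum_ge a
        rcases Nat.eq_or_lt_of_le h1 with heq | hlt
        · have hm1 : r a (Fin.last n) = 1 := by omega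
          rw [hm1]
          norm_num
          omega
        · have hne : ¬ (r a (Fin.last n) - 1 = 0) := by omega
          simp only [if_neg hne]
          have h4 := hγ2 (r a (Fin.last n) - 1) (by omega)
          rw [show r a (Fin.last n) - 1 + 1 = r a (Fin.last n) by omega] at h4
          omega
    | cast i =>
        rw [hlamcast, hσcast]
        exact sigma_gap_strict (hgaps i) (by have := hr1 a i.castSucc; omega) (hrK a _)
  -- inclusion into the superlevel set
  set Bset : Set (BoxInterval (n+1)) :=
    {R : BoxInterval (n+1) | (∀ i : Fin n, R.side i.castSucc ∈ T i) ∧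
      ∃ γ ∈ Γ, R.side (Fin.last n) = (2:ℝ)^γ * ∏ i : Fin p, R.side (jj i).castSucc} with hBset
  have hUsub : ∀ a : Fin n → Fin q, Set.univ.pi (fun j => topSet (σ j) K (r a j)) ⊆
      {x | ENNReal.ofReal α < maxOp Bset (E.indicator fun _ => (1:ℝ)) x} := by
    intro a x hx
    have hxj : ∀ j, x j ∈ topSet (σ j) K (r a j) := fun j => hx j (mem_univ j)
    have hcap := fun j => capture (hgap j) (lam a j) (hr1 a j) (hrK a j)
      (hlam_low a j) (hlam_high a j) (hxj j)
    set R : BoxInterval (n+1) :=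
      ⟨fun j => (⌊x j / 2^(lam a j)⌋ : ℝ) * 2^(lam a j),
       fun j => (⌊x j / 2^(lam a j)⌋ : ℝ) * 2^(lam a j) + 2^(lam a j),
       fun j => lt_add_of_pos_right _ (by positivity)⟩ with hRdef
    have hside : ∀ j, R.side j = 2^(lam a j) := by
      intro j
      simp only [BoxInterval.side, hRdef]
      ring
    have hxR : x ∈ R.toSet := by
      rw [BoxInterval.toSet, Set.mem_univ_pi]
      intro j
      exact ⟨(hcap j).1, ((hcap j).2.1).le⟩
    have hRB : R ∈ Bset := by
      rw [hBset]
      constructor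
      · intro i
        rw [hside, hlamcast]
        exact hσ1 i (r a i.castSucc) (by have := hrK a i.castSucc; omega)
      · refine ⟨γf (r a (Fin.last n)), hγ1 _ (by have := hrK a (Fin.last n); omega), ?_⟩
        rw [hside, hlamlast, zpow_add₀ (two_ne_zero (α := ℝ)), ← prod_two_zpow_real]
        congr 1
        apply Finset.prod_congr rfl
        intro i _
        rw [hside, hlamcast]
    have hIR : (∫⁻ y in R.toSet, ENNReal.ofReal |E.indicator (fun _ => (1:ℝ)) y| ∂volume)
        = volume (E ∩ R.toSet) := by
      have heq : (fun y => ENNReal.ofReal |E.indicator (fun _ => (1:ℝ)) y|)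
          = E.indicator (fun _ => (1:ℝ≥0∞)) := by
        funext y
        by_cases hy : y ∈ E <;> simp [hy]
      rw [heq]
      rw [lintegral_indicator hEmeas]
      simp [Measure.restrict_restrict hEmeas, inter_comm]
    have hRvol : volume R.toSet = ∏ j : Fin (n+1), (2:ℝ≥0∞)^(lam a j) := by
      rw [BoxInterval.toSet, volume_pi_pi]
      apply Finset.prod_congr rfl
      intro j _
      rw [hRdef]
      simp only
      rw [Real.volume_Icc, add_sub_cancel_left, ofReal_two_zpow]
    have hV0 : volume R.toSet ≠ 0 := by
      rw [hRvol]
      exact Finset.prod_ne_zero_iff.mpr fun j _ => two_zpow_ne_zero _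
    have hVtop : volume R.toSet ≠ ⊤ := by
      rw [hRvol]
      exact (ENNReal.prod_lt_top (fun j _ => (two_zpow_ne_top (lam a j)).lt_top)).ne
    have hEcap : ∏ j : Fin (n+1), (2:ℝ≥0∞)^(lam a j - (r a j : ℤ)) ≤ volume (E ∩ R.toSet) := by
      have hsub : Set.univ.pi (fun j => topSet (σ j) K 0
          ∩ Ico ((⌊x j / 2^(lam a j)⌋ : ℝ) * 2^(lam a j))
            ((⌊x j / 2^(lam a j)⌋ : ℝ) * 2^(lam a j) + 2^(lam a j))) ⊆ E ∩ R.toSet := by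
        intro y hy
        constructor
        · intro j hj
          exact (hy j hj).1
        · intro j hj
          have h2 := (hy j hj).2
          rw [hRdef]
          exact ⟨h2.1, h2.2.le⟩
      calc ∏ j : Fin (n+1), (2:ℝ≥0∞)^(lam a j - (r a j : ℤ))
          = volume (Set.univ.pi (fun j => topSet (σ j) K 0
            ∩ Ico ((⌊x j / 2^(lam a j)⌋ : ℝ) * 2^(lam a j))
              ((⌊x j / 2^(lam a j)⌋ : ℝ) * 2^(lam a j) + 2^(lam a j)))) := by
            rw [volume_pi_pi]
            exact (Finset.prod_congr rfl fun j _ => ((hcap j).2.2).symm)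
        _ ≤ volume (E ∩ R.toSet) := measure_mono hsub
    have hsumr : ∑ j : Fin (n+1), (r a j : ℤ) = (K:ℤ) := by
      rw [← Nat.cast_sum]
      exact_mod_cast congrArg (Nat.cast : ℕ → ℤ) (hrsum a)
    have hkey : (2:ℝ≥0∞)^(-(K:ℤ)) ≤
        (∫⁻ y in R.toSet, ENNReal.ofReal |E.indicator (fun _ => (1:ℝ)) y| ∂volume)
          / volume R.toSet := by
      rw [ENNReal.le_div_iff_mul_le (Or.inl hV0) (Or.inl hVtop), hIR]
      calc (2:ℝ≥0∞)^(-(K:ℤ)) * volume R.toSet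
          = ∏ j : Fin (n+1), (2:ℝ≥0∞)^(lam a j - (r a j : ℤ)) := by
            rw [hRvol, prod_two_zpow, prod_two_zpow, ← two_zpow_mul]
            congr 1
            rw [Finset.sum_sub_distrib, hsumr]
            ring
        _ ≤ volume (E ∩ R.toSet) := hEcap
    show ENNReal.ofReal α < maxOp Bset (E.indicator fun _ => (1:ℝ)) x
    apply lt_of_lt_of_le hα
    apply le_trans hkey
    exact le_iSup_of_le R (le_iSup_of_le hRB (le_iSup_of_le hxR le_rfl))
  -- volume of one-dimensional difference sets
  have hdiffvol : ∀ (j : Fin (n+1)) (m : ℕ), 1 ≤ m → m ≤ K →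
      volume (topSet (σ j) K m \ topSet (σ j) K (m-1))
        = (2:ℝ≥0∞)^((σ j K : ℤ) - K + m - 1) := by
    intro j m hm1 hmK
    rw [measure_diff (topSet_mono (σ j) K (by omega))
      (measurableSet_topSet (σ j) K (m-1)).nullMeasurableSet
      (by rw [volume_topSet (hgap j) (by omega : m - 1 ≤ K)]; exact two_zpow_ne_top _)]
    rw [volume_topSet (hgap j) hmK, volume_topSet (hgap j) (by omega : m - 1 ≤ K)]
    have e1 : (σ j K : ℤ) - (K - m : ℕ) = ((σ j K : ℤ) - K + m - 1) + 1 := by omega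
    have e2 : (σ j K : ℤ) - (K - (m-1) : ℕ) = (σ j K : ℤ) - K + m - 1 := by omega
    rw [e1, e2, two_zpow_mul, zpow_one, mul_two,
      ENNReal.add_sub_cancel_right (two_zpow_ne_top _)]
  -- the disjoint family
  set U : (Fin n → Fin q) → Set (Fin (n+1) → ℝ) :=
    fun a => Set.univ.pi (fun j => topSet (σ j) K (r a j) \ topSet (σ j) K (r a j - 1))
    with hUdef
  have hUmeas : ∀ a, MeasurableSet (U a) :=
    fun a => MeasurableSet.univ_pi fun j =>
      (measurableSet_topSet _ _ _).diff (measurableSet_topSet _ _ _)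
  have hUdisj : ((Finset.univ : Finset (Fin n → Fin q)) : Set (Fin n → Fin q)).PairwiseDisjoint U := by
    intro a1 _ a2 _ hne
    have hex : ∃ i : Fin n, a1 i ≠ a2 i := by
      by_contra hc
      push_neg at hc
      exact hne (funext hc)
    obtain ⟨i, hi⟩ := hex
    apply Set.disjoint_left.mpr
    intro x hx1 hx2
    have h1 := hx1 i.castSucc (mem_univ _)
    have h2 := hx2 i.castSucc (mem_univ _)
    simp only [Set.mem_diff] at h1 h2
    rw [hrcast] at h1 h2
    rcases Ne.lt_or_gt (fun hc : (a1 i : ℕ) = (a2 i : ℕ) => hi (Fin.ext hc)) with h | h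
    · exact h2.2 (topSet_mono (σ i.castSucc) K (by omega) h1.1)
    · exact h1.2 (topSet_mono (σ i.castSucc) K (by omega) h2.1)
  have hUvol : ∀ a, volume (U a)
      = (2:ℝ≥0∞)^((∑ j : Fin (n+1), (σ j K : ℤ)) + K - (n+1)*(K+1)) := by
    intro a
    rw [hUdef]
    simp only
    rw [volume_pi_pi]
    rw [Finset.prod_congr rfl (fun j _ => hdiffvol j (r a j) (hr1 a j) (hrK a j))]
    rw [prod_two_zpow]
    congr 1
    have hsumr : ∑ j : Fin (n+1), (r a j : ℤ) = (K:ℤ) := by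
      rw [← Nat.cast_sum]
      exact_mod_cast congrArg (Nat.cast : ℕ → ℤ) (hrsum a)
    have : ∀ j : Fin (n+1), (σ j K : ℤ) - K + (r a j) - 1
        = (σ j K : ℤ) + ((r a j : ℤ) + (-(K:ℤ) - 1)) := by intro j; ring
    rw [Finset.sum_congr rfl (fun j _ => this j), Finset.sum_add_distrib,
      Finset.sum_add_distrib, hsumr, Finset.sum_const, Finset.card_univ,
      Fintype.card_fin, nsmul_eq_mul]
    push_cast
    ring
  -- put it together
  calc ((K/(2*n) : ℕ) : ℝ≥0∞)^n * 2^((K:ℤ) - (n+1)) * volume E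
      = ∑ _a : Fin n → Fin q, (2:ℝ≥0∞)^((∑ j : Fin (n+1), (σ j K : ℤ)) + K - (n+1)*(K+1)) := by
        rw [Finset.sum_const, Finset.card_univ, Fintype.card_fun, Fintype.card_fin,
          Fintype.card_fin, nsmul_eq_mul, hEvol, prod_two_zpow, ← hq, Nat.cast_pow,
          mul_assoc, ← two_zpow_mul]
        congr 2
        rw [Finset.sum_sub_distrib, Finset.sum_const, Finset.card_univ, Fintype.card_fin,
          nsmul_eq_mul]
        push_cast
        ring
    _ = ∑ a : Fin n → Fin q, volume (U a) := by
        exact (Finset.sum_congr rfl fun a _ => (hUvol a).symm)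
    _ = volume (⋃ a ∈ (Finset.univ : Finset (Fin n → Fin q)), U a) :=
        (measure_biUnion_finset hUdisj fun a _ => hUmeas a).symm
    _ ≤ volume {x | ENNReal.ofReal α < maxOp Bset (E.indicator fun _ => (1:ℝ)) x} := by
        apply measure_mono
        apply Set.iUnion₂_subset
        intro a _
        refine subset_trans ?_ (hUsub a)
        apply Set.pi_mono
        intro j _
        exact diff_subset

end Rare14

/-- Application V (direct version): sharp weak type `L(1+log⁺L)^{n-1}` lower bound. Here the ambient dimension is `n + 1` (so `T₁,…,Tₙ` play the role of
`T₁,…,T_{n-1}` of the paper). -/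
theorem statement14 (n : ℕ) (hn : 1 ≤ n) (T : Fin n → Set ℝ)
    (hT : ∀ i, (T i).Infinite ∧ T i ⊆ {x | ∃ s : ℤ, x = (2:ℝ) ^ s})
    (Γ : Set ℤ) (hΓ : Γ.Infinite)
    (p : ℕ) (hp : 1 ≤ p) (hpn : p ≤ n) (jj : Fin p → Fin n) (hjj : StrictMono jj)
    (B : Set (BoxInterval (n + 1)))
    (hBdef : B = {R | (∀ i : Fin n, R.side i.castSucc ∈ T i) ∧
      ∃ γ ∈ Γ, R.side (Fin.last n) = (2:ℝ)^γ * ∏ i : Fin p, R.side (jj i).castSucc}) :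
    ∃ c : ℝ, 0 < c ∧ ∀ α : ℝ, 0 < α → α < 1 →
      ∃ E : Set (Fin (n + 1) → ℝ), Bornology.IsBounded E ∧ MeasurableSet E ∧ 0 < volume E ∧
        ENNReal.ofReal (c * (1 / α) * (1 + Real.logb 2 (1 / α)) ^ n) * volume E ≤
          volume {x | ENNReal.ofReal α < maxOp B (E.indicator fun _ => (1:ℝ)) x} := by
  classical
  subst hBdef
  set k₀ : ℕ := 100 * (n + 1) with hk0
  set c : ℝ := ((2:ℝ)^(k₀+2) * ((k₀:ℝ)+3)^n)⁻¹ with hc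
  have hcpos : 0 < c := by rw [hc]; positivity
  refine ⟨c, hcpos, ?_⟩
  intro α hα0 hα1
  have hinv1 : 1 < 1/α := one_lt_one_div hα0 hα1
  have hinv0 : 0 < 1/α := by positivity
  have hlog0 : 0 ≤ Real.logb 2 (1/α) := Real.logb_nonneg (by norm_num) hinv1.le
  by_cases hcase : Real.logb 2 (1/α) < (k₀:ℝ) + 2
  · -- trivial regime: α not too small
    obtain ⟨t, htfun⟩ : ∃ t : Fin n → ℝ, ∀ i, t i ∈ T i := by
      have := fun i : Fin n => (hT i).1.nonempty
      exact ⟨fun i => (this i).choose, fun i => (this i).choose_spec⟩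
    have htpos : ∀ i, 0 < t i := by
      intro i
      obtain ⟨s, hs⟩ := (hT i).2 (htfun i)
      rw [hs]; positivity
    obtain ⟨γ₀, hγ₀⟩ := hΓ.nonempty
    set bfun : Fin (n+1) → ℝ :=
      Fin.lastCases ((2:ℝ)^γ₀ * ∏ i : Fin p, t (jj i)) (fun i => t i) with hbfun
    have hbpos : ∀ j, (0:ℝ) < bfun j := by
      intro j
      induction j using Fin.lastCases with
      | last =>
          rw [hbfun]
          simp only [Fin.lastCases_last]
          have : (0:ℝ) < ∏ i : Fin p, t (jj i) := Finset.prod_pos fun i _ => htpos (jj i)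
          positivity
      | cast i =>
          rw [hbfun]
          simp only [Fin.lastCases_castSucc]
          exact htpos i
    set R₀ : BoxInterval (n+1) := ⟨fun _ => 0, bfun, fun j => hbpos j⟩ with hR₀
    have hside : ∀ j, R₀.side j = bfun j := by
      intro j; simp [hR₀, BoxInterval.side]
    refine ⟨R₀.toSet, ?_, ?_, ?_, ?_⟩
    · rw [BoxInterval.toSet, Set.pi_univ_Icc]
      exact isCompact_Icc.isBounded
    · exact MeasurableSet.univ_pi fun j => measurableSet_Icc
    · rw [BoxInterval.toSet, volume_pi_pi]
      rw [show (fun j => volume (Icc (R₀.a j) (R₀.b j)))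
        = fun j => ENNReal.ofReal (bfun j) by
          funext j; rw [Real.volume_Icc, hR₀]; norm_num]
      exact pos_iff_ne_zero.mpr (Finset.prod_ne_zero_iff.mpr fun j _ => by
        simp [ENNReal.ofReal_eq_zero, not_le, hbpos j])
    · have hvol0 : volume R₀.toSet ≠ 0 := by
        rw [BoxInterval.toSet, volume_pi_pi]
        apply Finset.prod_ne_zero_iff.mpr
        intro j _
        rw [Real.volume_Icc, hR₀]
        simp [ENNReal.ofReal_eq_zero, not_le, hbpos j]
      have hvoltop : volume R₀.toSet ≠ ⊤ := by
        rw [BoxInterval.toSet, volume_pi_pi]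
        exact (ENNReal.prod_lt_top fun j _ => by
          rw [Real.volume_Icc]; exact ENNReal.ofReal_lt_top).ne
      have hsub : R₀.toSet ⊆ {x | ENNReal.ofReal α <
          maxOp {R : BoxInterval (n+1) | (∀ i : Fin n, R.side i.castSucc ∈ T i) ∧
            ∃ γ ∈ Γ, R.side (Fin.last n) = (2:ℝ)^γ * ∏ i : Fin p, R.side (jj i).castSucc}
          (R₀.toSet.indicator fun _ => (1:ℝ)) x} := by
        intro x hx
        have hR₀B : R₀ ∈ {R : BoxInterval (n+1) | (∀ i : Fin n, R.side i.castSucc ∈ T i) ∧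
            ∃ γ ∈ Γ, R.side (Fin.last n) = (2:ℝ)^γ * ∏ i : Fin p, R.side (jj i).castSucc} := by
          constructor
          · intro i
            rw [hside, hbfun]
            simp only [Fin.lastCases_castSucc]
            exact htfun i
          · refine ⟨γ₀, hγ₀, ?_⟩
            rw [hside, hbfun]
            simp only [Fin.lastCases_last]
            congr 1
            apply Finset.prod_congr rfl
            intro i _
            rw [hside, hbfun]
            simp only [Fin.lastCases_castSucc]
        have hIR : (∫⁻ y in R₀.toSet,
            ENNReal.ofReal |R₀.toSet.indicator (fun _ => (1:ℝ)) y| ∂volume)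
            = volume R₀.toSet := by
          have heq : (fun y => ENNReal.ofReal |R₀.toSet.indicator (fun _ => (1:ℝ)) y|)
              = R₀.toSet.indicator (fun _ => (1:ℝ≥0∞)) := by
            funext y
            by_cases hy : y ∈ R₀.toSet <;> simp [hy]
          have hRmeas : MeasurableSet R₀.toSet :=
            MeasurableSet.univ_pi fun j => measurableSet_Icc
          rw [heq, lintegral_indicator hRmeas]
          simp [Measure.restrict_restrict hRmeas]
        show ENNReal.ofReal α < maxOp _ _ x
        have hone : (1:ℝ≥0∞) ≤ (∫⁻ y in R₀.toSet,
            ENNReal.ofReal |R₀.toSet.indicator (fun _ => (1:ℝ)) y| ∂volume)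
              / volume R₀.toSet := by
          rw [hIR, ENNReal.div_self hvol0 hvoltop]
        apply lt_of_lt_of_le (ENNReal.ofReal_lt_one.mpr hα1)
        apply le_trans hone
        exact le_iSup_of_le R₀ (le_iSup_of_le hR₀B (le_iSup_of_le hx le_rfl))
      apply le_trans ?_ (measure_mono hsub)
      have hle1 : ENNReal.ofReal (c * (1/α) * (1 + Real.logb 2 (1/α))^n) ≤ 1 := by
        apply ENNReal.ofReal_le_one.mpr
        have h1 : 1/α < 2^(k₀+2) := by
          have hb : Real.logb 2 (1/α) < ((k₀+2:ℕ):ℝ) := by push_cast; linarith [hcase]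
          have h2 := (Real.logb_lt_iff_lt_rpow (by norm_num : (1:ℝ) < 2) hinv0).mp hb
          rwa [Real.rpow_natCast] at h2
        have h2 : (1 + Real.logb 2 (1/α))^n ≤ ((k₀:ℝ)+3)^n := by
          apply pow_le_pow_left₀ (by linarith)
          linarith
        calc c * (1/α) * (1 + Real.logb 2 (1/α))^n
            ≤ c * 2^(k₀+2) * ((k₀:ℝ)+3)^n := by gcongr
          _ = 1 := by
              rw [hc]
              field_simp
      calc ENNReal.ofReal (c * (1/α) * (1 + Real.logb 2 (1/α))^n) * volume R₀.toSet
          ≤ 1 * volume R₀.toSet := mul_le_mul_left hle1 _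
        _ = volume R₀.toSet := one_mul _
  · -- main case: α small
    push_neg at hcase
    set L := Nat.floor (Real.logb 2 (1/α)) with hL
    have hLge : k₀ + 2 ≤ L := by
      apply Nat.le_floor
      push_cast
      linarith
    set K := L - 1 with hKdef
    have hKk0 : k₀ + 1 ≤ K := by omega
    have hK2n : 2*n + 2 ≤ K := by omega
    have hKL : (K:ℝ) + 1 = (L:ℝ) := by
      have : K + 1 = L := by omega
      exact_mod_cast congrArg (Nat.cast : ℕ → ℝ) this
    have hfloor_le : (L:ℝ) ≤ Real.logb 2 (1/α) := Nat.floor_le hlog0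
    have hflt : Real.logb 2 (1/α) < (L:ℝ) + 1 := Nat.lt_floor_add_one _
    have hup : 1/α < 2^(K+2) := by
      have hb : Real.logb 2 (1/α) < ((K+2:ℕ):ℝ) := by push_cast; linarith
      have h2 := (Real.logb_lt_iff_lt_rpow (by norm_num : (1:ℝ) < 2) hinv0).mp hb
      rwa [Real.rpow_natCast] at h2
    have hdown : (2:ℝ)^(K+1) ≤ 1/α := by
      have hb : ((K+1:ℕ):ℝ) ≤ Real.logb 2 (1/α) := by push_cast; linarith
      have h2 := (Real.le_logb_iff_rpow_le (by norm_num : (1:ℝ) < 2) hinv0).mp hb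
      rwa [Real.rpow_natCast] at h2
    have hαK : ENNReal.ofReal α < 2^(-(K:ℤ)) := by
      rw [← Rare14.ofReal_two_zpow]
      apply (ENNReal.ofReal_lt_ofReal_iff (by positivity)).mpr
      have h2K : (0:ℝ) < 2^K := by positivity
      have hm : α * 2^(K+1) ≤ 1 := by
        have h := mul_le_mul_of_nonneg_left hdown hα0.le
        rw [mul_one_div, div_self hα0.ne'] at h
        exact h
      have hzp : (2:ℝ)^(-(K:ℤ)) = ((2:ℝ)^K)⁻¹ := by
        rw [zpow_neg, zpow_natCast]
      rw [hzp, ← one_div, lt_div_iff₀ h2K]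
      have hpow : (2:ℝ)^(K+1) = 2 * 2^K := by ring
      rw [hpow] at hm
      nlinarith [hm, mul_pos hα0 h2K]
    obtain ⟨E, hEbd, hEmeas, hEpos, hEineq⟩ :=
      Rare14.main_construction hn T hT Γ hΓ p jj K hK2n α hαK
    refine ⟨E, hEbd, hEmeas, hEpos, ?_⟩
    refine le_trans (mul_le_mul_left ?_ (volume E)) hEineq
    set q := K/(2*n) with hq
    have hq1 : 1 ≤ q := (Nat.one_le_div_iff (by omega)).mpr (by omega)
    -- the real-number inequality
    have hdm := Nat.div_add_mod K (2*n)
    rw [← hq] at hdm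
    have hmod : K % (2*n) < 2*n := Nat.mod_lt _ (by omega)
    have hdmR : 2*(n:ℝ)*(q:ℝ) + ((K % (2*n) : ℕ):ℝ) = (K:ℝ) := by
      exact_mod_cast congrArg (Nat.cast : ℕ → ℝ) hdm
    have hmodR : ((K % (2*n):ℕ):ℝ) < 2*(n:ℝ) := by exact_mod_cast hmod
    have hKR : 100*((n:ℝ)+1)+1 ≤ (K:ℝ) := by
      have : 100*(n+1)+1 ≤ K := by omega
      exact_mod_cast this
    have hnR : (1:ℝ) ≤ (n:ℝ) := by exact_mod_cast hn
    have hnq : ((K:ℝ)+3) ≤ 8*((n:ℝ)*(q:ℝ)) := by nlinarith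
    have hlogup : 1 + Real.logb 2 (1/α) ≤ (K:ℝ) + 3 := by linarith
    have h2 : (1 + Real.logb 2 (1/α))^n ≤ ((K:ℝ)+3)^n :=
      pow_le_pow_left₀ (by linarith) hlogup n
    have h3 : ((K:ℝ)+3)^n ≤ (8*((n:ℝ)*(q:ℝ)))^n :=
      pow_le_pow_left₀ (by positivity) hnq n
    have hnum : (2:ℝ)^(n+3) * (8^n * (n:ℝ)^n) ≤ 2^(k₀+2) * ((k₀:ℝ)+3)^n := by
      apply mul_le_mul (pow_le_pow_right₀ one_le_two (by omega)) ?_ (by positivity)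
        (by positivity)
      rw [← mul_pow]
      apply pow_le_pow_left₀ (by positivity)
      have : (k₀:ℝ) = 100*((n:ℝ)+1) := by rw [hk0]; push_cast; ring
      linarith
    have hcle : c ≤ ((2:ℝ)^(n+3) * (8^n * (n:ℝ)^n))⁻¹ := by
      rw [hc]
      exact inv_anti₀ (by positivity) hnum
    have hconst : c * ((2:ℝ)^(n+3) * (8^n * (n:ℝ)^n)) ≤ 1 := by
      have hXpos : (0:ℝ) < (2:ℝ)^(n+3) * (8^n * (n:ℝ)^n) := by positivity
      calc c * ((2:ℝ)^(n+3) * (8^n * (n:ℝ)^n))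
          ≤ ((2:ℝ)^(n+3) * (8^n * (n:ℝ)^n))⁻¹ * ((2:ℝ)^(n+3) * (8^n * (n:ℝ)^n)) :=
            mul_le_mul_of_nonneg_right hcle hXpos.le
        _ = 1 := inv_mul_cancel₀ hXpos.ne'
    have hreal : c * (1/α) * (1 + Real.logb 2 (1/α))^n ≤ (q:ℝ)^n * 2^(K-(n+1)) := by
      calc c * (1/α) * (1 + Real.logb 2 (1/α))^n
          ≤ c * 2^(K+2) * (8*((n:ℝ)*(q:ℝ)))^n := by
            apply mul_le_mul (mul_le_mul le_rfl hup.le (by positivity) hcpos.le)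
              (h2.trans h3) (by positivity) (by positivity)
        _ = (c * ((2:ℝ)^(n+3) * (8^n * (n:ℝ)^n))) * ((q:ℝ)^n * 2^(K-(n+1))) := by
            rw [show K + 2 = (K-(n+1)) + (n+3) by omega, pow_add]
            ring
        _ ≤ 1 * ((q:ℝ)^n * 2^(K-(n+1))) :=
            mul_le_mul_of_nonneg_right hconst (by positivity)
        _ = (q:ℝ)^n * 2^(K-(n+1)) := one_mul _
    calc ENNReal.ofReal (c * (1/α) * (1 + Real.logb 2 (1/α))^n)
        ≤ ENNReal.ofReal ((q:ℝ)^n * 2^(K-(n+1))) := ENNReal.ofReal_le_ofReal hreal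
      _ = ((q:ℕ):ℝ≥0∞)^n * 2^((K:ℤ)-(n+1)) := by
          rw [ENNReal.ofReal_mul (by positivity), ENNReal.ofReal_pow (by positivity),
            ENNReal.ofReal_natCast]
          congr 1
          rw [show ((2:ℝ)^(K-(n+1))) = (2:ℝ)^(((K-(n+1):ℕ)):ℤ) by rw [zpow_natCast],
            Rare14.ofReal_two_zpow]
          congr 1
          omega

end
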